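/- Let G_1 and G_2 be finite simple graphs whose vertex sets intersect in exactly one vertex v, and let G = G_1 ∪ G_2 (union of vertex sets and edge sets). Then minrk_q(G) = minrk_q(G_1 − v) + minrk_q(G_2 − v) + (minrk_q(G_1) − minrk_q(G_1 − v)) · (minrk_q(G_2) − minrk_q(G_2 − v)). -/

import Mathlib

open scoped Classical

/-- A matrix `M` fits the graph `G` if its diagonal entries are nonzero and its
entries at distinct non-adjacent pairs of vertices are zero. -/
def Fits {V F : Type} [Fintype V] [Field F]
    (G : SimpleGraph V) (M : Matrix V V F) : Prop :=
  (∀ u, M u u ≠ 0) ∧ ∀ u v, u ≠ v → ¬ G.Adj u v → M u v = 0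

/-- The min-rank of `G` over the field `F`: the minimum rank of a matrix fitting `G`. -/
noncomputable def minrk (F : Type) [Field F] {V : Type} [Fintype V]
    (G : SimpleGraph V) : ℕ :=
  sInf {r : ℕ | ∃ M : Matrix V V F, Fits G M ∧ M.rank = r}

section MinrkAux

open Matrix Set Submodule

variable {F : Type} [Field F]

lemma rank_submatrix_le' {m n p q : Type} [Fintype m] [Fintype n] [Fintype p] [Fintype q]
    (M : Matrix m n F) (f : p → m) (g : q → n) :
    (M.submatrix f g).rank ≤ M.rank := by
  have h : M.submatrix f g =
      (Matrix.of fun a i => if f a = i then (1:F) else 0) * M *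
        (Matrix.of fun j b => if j = g b then (1:F) else 0) := by
    ext a b
    simp [Matrix.mul_apply, ite_mul, mul_ite, Finset.sum_ite_eq, Finset.sum_ite_eq']
  rw [h]
  exact le_trans (Matrix.rank_mul_le_left _ _) (Matrix.rank_mul_le_right _ _)

lemma rank_fromBlocks_diag {α β : Type} [Fintype α] [Fintype β]
    (X : Matrix α α F) (Y : Matrix β β F) :
    (Matrix.fromBlocks X 0 0 Y).rank = X.rank + Y.rank := by
  classical
  set C := Matrix.fromBlocks X 0 0 Y with hC
  let ι1 : (α → F) →ₗ[F] (α ⊕ β → F) :=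
    { toFun := fun f => Sum.elim f 0
      map_add' := by intro f g; funext x; cases x <;> simp
      map_smul' := by intro c f; funext x; cases x <;> simp }
  let ι2 : (β → F) →ₗ[F] (α ⊕ β → F) :=
    { toFun := fun f => Sum.elim 0 f
      map_add' := by intro f g; funext x; cases x <;> simp
      map_smul' := by intro c f; funext x; cases x <;> simp }
  have hinj1 : Function.Injective ι1 := fun f g h => funext fun a => congrFun h (Sum.inl a)
  have hinj2 : Function.Injective ι2 := fun f g h => funext fun b => congrFun h (Sum.inr b)
  have h1 : (C : α ⊕ β → (α ⊕ β → F)) ∘ Sum.inl = ι1 ∘ X := by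
    funext a; funext j; cases j <;> rfl
  have h2 : (C : α ⊕ β → (α ⊕ β → F)) ∘ Sum.inr = ι2 ∘ Y := by
    funext b; funext j; cases j <;> rfl
  have hrange : Set.range C = ι1 '' Set.range X ∪ ι2 '' Set.range Y := by
    rw [Sum.range_eq (f := (C : α ⊕ β → (α ⊕ β → F))), h1, h2, Set.range_comp (f := (X : α → (α → F))),
      Set.range_comp (f := (Y : β → (β → F)))]
  have hspan : Submodule.span F (Set.range C) =
      (Submodule.span F (Set.range X)).map ι1 ⊔ (Submodule.span F (Set.range Y)).map ι2 := by
    rw [hrange, Submodule.span_union, Submodule.span_image, Submodule.span_image]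
  have hinf : (Submodule.span F (Set.range X)).map ι1 ⊓ (Submodule.span F (Set.range Y)).map ι2 = ⊥ := by
    rw [eq_bot_iff]
    rintro x ⟨⟨f, _, rfl⟩, ⟨g, _, hg⟩⟩
    have : ι1 f = 0 := by
      funext j
      cases j with
      | inl a => exact (congrFun hg (Sum.inl a)).symm.trans rfl
      | inr b => rfl
    simp [this]
  rw [show C.rank = Module.finrank F (Submodule.span F (Set.range C)) from C.rank_eq_finrank_span_row,
    show X.rank = Module.finrank F (Submodule.span F (Set.range X)) from X.rank_eq_finrank_span_row,
    show Y.rank = Module.finrank F (Submodule.span F (Set.range Y)) from Y.rank_eq_finrank_span_row, hspan]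
  have hadd := Submodule.finrank_sup_add_finrank_inf_eq
    ((Submodule.span F (Set.range X)).map ι1) ((Submodule.span F (Set.range Y)).map ι2)
  rw [hinf, finrank_bot, add_zero] at hadd
  rw [hadd]
  congr 1
  · exact (LinearEquiv.finrank_eq
      (Submodule.equivMapOfInjective ι1 hinj1 (Submodule.span F (Set.range X)))).symm
  · exact (LinearEquiv.finrank_eq
      (Submodule.equivMapOfInjective ι2 hinj2 (Submodule.span F (Set.range Y)))).symm

variable {V : Type} [Fintype V]

lemma fits_one (G : SimpleGraph V) : Fits G (1 : Matrix V V F) :=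
  ⟨fun u => by simp, fun u w h _ => Matrix.one_apply_ne h⟩

lemma minrk_le {G : SimpleGraph V} {M : Matrix V V F} (h : Fits G M) : minrk F G ≤ M.rank :=
  Nat.sInf_le ⟨M, h, rfl⟩

lemma minrk_mem (G : SimpleGraph V) : ∃ M : Matrix V V F, Fits G M ∧ M.rank = minrk F G := by
  have hne : {r : ℕ | ∃ M : Matrix V V F, Fits G M ∧ M.rank = r}.Nonempty :=
    ⟨_, 1, fits_one G, rfl⟩
  exact Nat.sInf_mem hne

lemma minrk_le_cover (G : SimpleGraph V) (s t : Set V) [Fintype ↥s] [Fintype ↥t] (h : ∀ u, u ∉ s → u ∈ t) :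
    minrk F G ≤ minrk F (G.induce s) + minrk F (G.induce t) := by
  obtain ⟨M1, hM1, hr1⟩ := minrk_mem (F := F) (G.induce s)
  obtain ⟨M2, hM2, hr2⟩ := minrk_mem (F := F) (G.induce t)
  set f : V → ↥s ⊕ ↥t := fun u => if hu : u ∈ s then Sum.inl ⟨u, hu⟩ else Sum.inr ⟨u, h u hu⟩
    with hf
  set N := (Matrix.fromBlocks M1 0 0 M2).submatrix f f with hN
  have hfit : Fits G N := by
    constructor
    · intro u
      by_cases hu : u ∈ s
      · simpa [hN, hf, hu] using hM1.1 ⟨u, hu⟩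
      · simpa [hN, hf, hu] using hM2.1 ⟨u, h u hu⟩
    · intro u w hne hadj
      by_cases hu : u ∈ s <;> by_cases hw : w ∈ s
      · have hne' : (⟨u, hu⟩ : ↥s) ≠ ⟨w, hw⟩ := fun he => hne (congrArg Subtype.val he)
        have hadj' : ¬ (G.induce s).Adj ⟨u, hu⟩ ⟨w, hw⟩ := fun ha => hadj ha
        simpa [hN, hf, hu, hw] using hM1.2 ⟨u, hu⟩ ⟨w, hw⟩ hne' hadj'
      · simp [hN, hf, hu, hw]
      · simp [hN, hf, hu, hw]
      · have hne' : (⟨u, h u hu⟩ : ↥t) ≠ ⟨w, h w hw⟩ := fun he => hne (congrArg Subtype.val he)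
        have hadj' : ¬ (G.induce t).Adj ⟨u, h u hu⟩ ⟨w, h w hw⟩ := fun ha => hadj ha
        simpa [hN, hf, hu, hw] using hM2.2 ⟨u, h u hu⟩ ⟨w, h w hw⟩ hne' hadj'
  calc minrk F G ≤ N.rank := minrk_le hfit
    _ ≤ (Matrix.fromBlocks M1 0 0 M2).rank := rank_submatrix_le' _ f f
    _ = M1.rank + M2.rank := rank_fromBlocks_diag M1 M2
    _ = _ := by rw [hr1, hr2]

lemma minrk_le_diff_add_one (G : SimpleGraph V) (s : Set V) (w : V)
    [Fintype ↥s] [Fintype ↥(s \ {w} : Set V)] :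
    minrk F (G.induce s) ≤ minrk F (G.induce (s \ {w})) + 1 := by
  obtain ⟨MA, hMA, hr⟩ := minrk_mem (F := F) (G.induce (s \ {w}))
  set f : ↥s → ↥(s \ {w} : Set V) ⊕ Unit :=
    fun u => if hu : (u : V) ∈ (s \ {w} : Set V) then Sum.inl ⟨u, hu⟩ else Sum.inr () with hf
  set N := (Matrix.fromBlocks MA 0 0 (1 : Matrix Unit Unit F)).submatrix f f with hN
  have hval : ∀ u : ↥s, (u : V) ∉ (s \ {w} : Set V) → (u : V) = w := by
    intro u hu
    by_contra hne
    exact hu ⟨u.2, hne⟩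
  have hfpos : ∀ (u : ↥s) (hu : (u : V) ∈ (s \ {w} : Set V)), f u = Sum.inl ⟨u, hu⟩ :=
    fun u hu => dif_pos hu
  have hfneg : ∀ (u : ↥s), (u : V) ∉ (s \ {w} : Set V) → f u = Sum.inr () :=
    fun u hu => dif_neg hu
  have hfit : Fits (G.induce s) N := by
    constructor
    · intro u
      by_cases hu : (u : V) ∈ (s \ {w} : Set V)
      · rw [hN]
        simp only [Matrix.submatrix_apply, hfpos u hu, Matrix.fromBlocks_apply₁₁]
        exact hMA.1 ⟨u, hu⟩
      · rw [hN]
        simp only [Matrix.submatrix_apply, hfneg u hu, Matrix.fromBlocks_apply₂₂]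
        simp
    · intro u u' hne hadj
      by_cases hu : (u : V) ∈ (s \ {w} : Set V) <;> by_cases hu' : (u' : V) ∈ (s \ {w} : Set V)
      · have hne' : (⟨u, hu⟩ : ↥(s \ {w} : Set V)) ≠ ⟨u', hu'⟩ := by
          intro he
          have h2 := congrArg Subtype.val he
          exact hne (Subtype.ext h2)
        have hadj' : ¬ (G.induce (s \ {w} : Set V)).Adj ⟨u, hu⟩ ⟨u', hu'⟩ := fun ha => hadj ha
        rw [hN]
        simp only [Matrix.submatrix_apply, hfpos u hu, hfpos u' hu', Matrix.fromBlocks_apply₁₁]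
        exact hMA.2 ⟨u, hu⟩ ⟨u', hu'⟩ hne' hadj'
      · rw [hN]
        simp only [Matrix.submatrix_apply, hfpos u hu, hfneg u' hu', Matrix.fromBlocks_apply₁₂]
        simp
      · rw [hN]
        simp only [Matrix.submatrix_apply, hfneg u hu, hfpos u' hu', Matrix.fromBlocks_apply₂₁]
        simp
      · exact absurd (Subtype.ext ((hval u hu).trans (hval u' hu').symm)) hne
  calc minrk F (G.induce s) ≤ N.rank := minrk_le hfit
    _ ≤ (Matrix.fromBlocks MA 0 0 (1 : Matrix Unit Unit F)).rank := rank_submatrix_le' _ f f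
    _ = MA.rank + (1 : Matrix Unit Unit F).rank := rank_fromBlocks_diag _ _
    _ = MA.rank + 1 := by rw [Matrix.rank_one]; simp
    _ = _ := by rw [hr]

lemma blocks_eq (M : Matrix V V F) (A B : Set V)
    (h1 : ∀ a : ↥A, ∀ b : ↥B, M a b = 0) (h2 : ∀ a : ↥A, ∀ b : ↥B, M b a = 0) :
    M.submatrix (Sum.elim (fun a : ↥A => (a : V)) (fun b : ↥B => (b : V)))
      (Sum.elim (fun a : ↥A => (a : V)) (fun b : ↥B => (b : V))) =
      Matrix.fromBlocks (M.submatrix (fun a : ↥A => (a : V)) (fun a : ↥A => (a : V))) 0 0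
        (M.submatrix (fun b : ↥B => (b : V)) (fun b : ↥B => (b : V))) := by
  ext i j
  cases i with
  | inl a =>
    cases j with
    | inl b => rfl
    | inr b => simpa using h1 a b
  | inr a =>
    cases j with
    | inl b => simpa using h2 b a
    | inr b => rfl

lemma delta_zero {V : Type} [Fintype V] (G : SimpleGraph V) (M : Matrix V V F) (hM : Fits G M)
    (s : Set V) (v : V) [Fintype ↥s] [Fintype ↥(s \ {v} : Set V)]
    (cA cA' : ↥(s \ {v} : Set V) → F)
    (hrow : ∀ x : ↥(s \ {v} : Set V), M v ↑x = ∑ x' : ↥(s \ {v} : Set V), cA x' * M ↑x' ↑x)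
    (hcol : ∀ x : ↥(s \ {v} : Set V), M ↑x v = ∑ y : ↥(s \ {v} : Set V), cA' y * M ↑x ↑y)
    (hrk : (M.submatrix (fun a : ↥(s \ {v} : Set V) => (a : V))
        (fun a : ↥(s \ {v} : Set V) => (a : V))).rank < minrk F (G.induce s)) :
    ∑ x : ↥(s \ {v} : Set V), cA x * M ↑x v = 0 := by
  by_contra hδ
  set MA := M.submatrix (fun a : ↥(s \ {v} : Set V) => (a : V)) (fun a : ↥(s \ {v} : Set V) => (a : V)) with hMA
  set P : Matrix ↥s ↥(s \ {v} : Set V) F :=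
    Matrix.of fun u x => if hu : (u : V) ∈ (s \ {v} : Set V) then (if x = ⟨u, hu⟩ then (1:F) else 0) else cA x
    with hP
  set Q : Matrix ↥(s \ {v} : Set V) ↥s F :=
    Matrix.of fun y w => if hw : (w : V) ∈ (s \ {v} : Set V) then (if y = ⟨w, hw⟩ then (1:F) else 0) else cA' y
    with hQ
  set K := P * (MA * Q) with hK
  have husv : ∀ u : ↥s, (u : V) ∉ (s \ {v} : Set V) → (u : V) = v := by
    intro u hu
    by_contra hne
    exact hu ⟨u.2, hne⟩
  have hMAQ : ∀ (x : ↥(s \ {v} : Set V)) (w : ↥s),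
      (MA * Q) x w = if hw : (w : V) ∈ (s \ {v} : Set V) then M ↑x ↑w else M ↑x v := by
    intro x w
    by_cases hw : (w : V) ∈ (s \ {v} : Set V)
    · rw [Matrix.mul_apply, dif_pos hw]
      have hQw : ∀ y : ↥(s \ {v} : Set V), Q y w = if y = ⟨w, hw⟩ then (1:F) else 0 := by
        intro y; simp only [hQ, Matrix.of_apply, dif_pos hw]
      simp only [hQw, mul_ite, mul_one, mul_zero]
      rw [Finset.sum_ite_eq' Finset.univ (⟨(w : V), hw⟩ : ↥(s \ {v} : Set V)) (fun y => MA x y)]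
      simp [hMA]
    · rw [Matrix.mul_apply, dif_neg hw, hcol x]
      apply Finset.sum_congr rfl
      intro y _
      simp only [hQ, Matrix.of_apply, dif_neg hw, hMA, Matrix.submatrix_apply]
      ring
  have hKentry : ∀ (u w : ↥s), K u w =
      if hu : (u : V) ∈ (s \ {v} : Set V) then (if (w : V) ∈ (s \ {v} : Set V) then M ↑u ↑w else M ↑u v)
      else (if (w : V) ∈ (s \ {v} : Set V) then M v ↑w else ∑ x : ↥(s \ {v} : Set V), cA x * M ↑x v) := by
    intro u w
    rw [hK, Matrix.mul_apply]
    by_cases hu : (u : V) ∈ (s \ {v} : Set V)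
    · rw [dif_pos hu]
      have hPu : ∀ x : ↥(s \ {v} : Set V), P u x = if x = ⟨u, hu⟩ then (1:F) else 0 := by
        intro x; simp only [hP, Matrix.of_apply, dif_pos hu]
      simp only [hPu, ite_mul, one_mul, zero_mul]
      rw [Finset.sum_ite_eq' Finset.univ (⟨(u : V), hu⟩ : ↥(s \ {v} : Set V)) (fun x => (MA * Q) x w)]
      simp only [Finset.mem_univ, if_true]
      rw [hMAQ]
      by_cases hw : (w : V) ∈ (s \ {v} : Set V)
      · rw [dif_pos hw, if_pos hw]
      · rw [dif_neg hw, if_neg hw]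
    · rw [dif_neg hu]
      have hPu : ∀ x : ↥(s \ {v} : Set V), P u x = cA x := by
        intro x; simp only [hP, Matrix.of_apply, dif_neg hu]
      simp only [hPu]
      by_cases hw : (w : V) ∈ (s \ {v} : Set V)
      · rw [if_pos hw, hrow ⟨w, hw⟩]
        apply Finset.sum_congr rfl
        intro x _
        rw [hMAQ, dif_pos hw]
      · rw [if_neg hw]
        apply Finset.sum_congr rfl
        intro x _
        rw [hMAQ, dif_neg hw]
  have hfit : Fits (G.induce s) K := by
    constructor
    · intro u
      rw [hKentry]
      by_cases hu : (u : V) ∈ (s \ {v} : Set V)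
      · rw [dif_pos hu, if_pos hu]
        exact hM.1 ↑u
      · rw [dif_neg hu, if_neg hu]
        exact hδ
    · intro u w hne hadj
      have hadj' : ¬ G.Adj ↑u ↑w := fun ha => hadj ha
      rw [hKentry]
      by_cases hu : (u : V) ∈ (s \ {v} : Set V) <;> by_cases hw : (w : V) ∈ (s \ {v} : Set V)
      · rw [dif_pos hu, if_pos hw]
        exact hM.2 ↑u ↑w (fun he => hne (Subtype.ext he)) hadj'
      · rw [dif_pos hu, if_neg hw]
        have hwv := husv w hw
        rw [hwv] at hadj'
        refine hM.2 ↑u v ?_ hadj'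
        exact hu.2
      · rw [dif_neg hu, if_pos hw]
        have huv := husv u hu
        rw [huv] at hadj'
        refine hM.2 v ↑w ?_ hadj'
        exact fun he => hw.2 (he.symm) |>.elim
      · exact absurd (Subtype.ext ((husv u hu).trans (husv w hw).symm)) hne
  have h1 : minrk F (G.induce s) ≤ K.rank := minrk_le hfit
  have h2 : K.rank ≤ MA.rank :=
    le_trans (Matrix.rank_mul_le_right P (MA * Q)) (Matrix.rank_mul_le_left MA Q)
  omega

lemma exists_row_combo {V ι : Type} [Fintype V] [Fintype ι] (M : Matrix V V F) (g : ι → V)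
    (h : M.rank ≤ (M.submatrix g id).rank) (i : V) :
    ∃ c : ι → F, ∀ j, M i j = ∑ a, c a * M (g a) j := by
  have hsub : Set.range (M.submatrix g id) ⊆ Set.range M := by
    rintro _ ⟨a, rfl⟩; exact ⟨g a, rfl⟩
  have hle : Submodule.span F (Set.range (M.submatrix g id)) ≤ Submodule.span F (Set.range M) :=
    Submodule.span_mono hsub
  have e1 : M.rank = Module.finrank F (Submodule.span F (Set.range M)) := M.rank_eq_finrank_span_row
  have e2 : (M.submatrix g id).rank = Module.finrank F (Submodule.span F (Set.range (M.submatrix g id))) :=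
    (M.submatrix g id).rank_eq_finrank_span_row
  have heq : Submodule.span F (Set.range (M.submatrix g id)) = Submodule.span F (Set.range M) :=
    Submodule.eq_of_le_of_finrank_le hle (by omega)
  have hmem : M i ∈ Submodule.span F (Set.range (M.submatrix g id)) :=
    heq ▸ Submodule.subset_span ⟨i, rfl⟩
  obtain ⟨c, hc⟩ := (mem_span_range_iff_exists_fun F).1 hmem
  refine ⟨c, fun j => ?_⟩
  have := congrFun hc j
  simp only [Finset.sum_apply, Pi.smul_apply, smul_eq_mul] at this
  rw [← this]
  rfl

lemma fits_induce {G : SimpleGraph V} {M : Matrix V V F} (h : Fits G M) (s : Set V) [Fintype ↥s] :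
    Fits (G.induce s) (M.submatrix (fun a : ↥s => (a : V)) (fun a : ↥s => (a : V))) := by
  refine ⟨fun u => h.1 u, fun u w hne hadj => ?_⟩
  refine h.2 u w (fun he => hne (Subtype.ext he)) (fun ha => hadj ?_)
  exact ha

lemma minrk_le_induce_subset (G : SimpleGraph V) (s t : Set V) [Fintype ↥s] [Fintype ↥t] (hst : s ⊆ t) :
    minrk F (G.induce s) ≤ minrk F (G.induce t) := by
  obtain ⟨M, hM, hrk⟩ := minrk_mem (F := F) (G.induce t)
  set j : s → t := fun x => ⟨x.1, hst x.2⟩ with hj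
  have hfit : Fits (G.induce s) (M.submatrix j j) := by
    refine ⟨fun u => hM.1 (j u), fun u w hne hadj => ?_⟩
    refine hM.2 (j u) (j w) (fun he => hne ?_) (fun ha => hadj ?_)
    · have h2 := congrArg Subtype.val he
      exact Subtype.ext h2
    · exact ha
  calc minrk F (G.induce s) ≤ (M.submatrix j j).rank := minrk_le hfit
    _ ≤ M.rank := rank_submatrix_le' M j j
    _ = _ := hrk


end MinrkAux

open Matrix Set Submodule

set_option maxHeartbeats 1000000 in
theorem minrk_union_one_common_vertex {V F : Type} [Fintype V] [Field F] [Fintype F]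
    (G : SimpleGraph V) (S1 S2 : Set V) (v : V)
    (hcap : S1 ∩ S2 = {v}) (hcup : S1 ∪ S2 = Set.univ)
    (hedges : ∀ a b, G.Adj a b → (a ∈ S1 ∧ b ∈ S1) ∨ (a ∈ S2 ∧ b ∈ S2)) :
    minrk F G =
      minrk F (G.induce (S1 \ {v})) + minrk F (G.induce (S2 \ {v})) +
        (minrk F (G.induce S1) - minrk F (G.induce (S1 \ {v}))) *
          (minrk F (G.induce S2) - minrk F (G.induce (S2 \ {v}))) := by
  classical
  have hv12 : v ∈ S1 ∩ S2 := by rw [hcap]; exact Set.mem_singleton v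
  have hv1 : v ∈ S1 := hv12.1
  have hv2 : v ∈ S2 := hv12.2
  have hAnotS2 : ∀ a : V, a ∈ S1 \ {v} → a ∉ S2 := by
    intro a ha hs2
    have h5 : a ∈ S1 ∩ S2 := ⟨ha.1, hs2⟩
    rw [hcap] at h5
    exact ha.2 h5
  have hBnotS1 : ∀ b : V, b ∈ S2 \ {v} → b ∉ S1 := by
    intro b hb hs1
    have h5 : b ∈ S1 ∩ S2 := ⟨hs1, hb.1⟩
    rw [hcap] at h5
    exact hb.2 h5
  have hz : ∀ (M : Matrix V V F), Fits G M →
      ∀ (a : ↥(S1 \ {v} : Set V)) (b : ↥(S2 \ {v} : Set V)), M ↑a ↑b = 0 ∧ M ↑b ↑a = 0 := by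
    intro M hM a b
    have hne : (a : V) ≠ (b : V) := fun he => (hAnotS2 a a.2) (he ▸ b.2.1)
    have hnadj : ¬ G.Adj ↑a ↑b := by
      intro hadj
      rcases hedges _ _ hadj with ⟨_, h⟩ | ⟨h, _⟩
      · exact hBnotS1 b b.2 h
      · exact hAnotS2 a a.2 h
    exact ⟨hM.2 _ _ hne hnadj, hM.2 _ _ (Ne.symm hne) (fun h => hnadj h.symm)⟩
  have hle1 : minrk F (G.induce (S1 \ {v})) ≤ minrk F (G.induce S1) :=
    minrk_le_induce_subset G (S1 \ {v}) S1 Set.diff_subset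
  have hle2 : minrk F (G.induce (S2 \ {v})) ≤ minrk F (G.induce S2) :=
    minrk_le_induce_subset G (S2 \ {v}) S2 Set.diff_subset
  have hle1' : minrk F (G.induce S1) ≤ minrk F (G.induce (S1 \ {v})) + 1 :=
    minrk_le_diff_add_one G S1 v
  have hle2' : minrk F (G.induce S2) ≤ minrk F (G.induce (S2 \ {v})) + 1 :=
    minrk_le_diff_add_one G S2 v
  have hup1 : minrk F G ≤ minrk F (G.induce S1) + minrk F (G.induce (S2 \ {v})) := by
    refine minrk_le_cover G S1 (S2 \ {v}) ?_
    intro u hu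
    have hmem : u ∈ S1 ∪ S2 := by rw [hcup]; exact Set.mem_univ u
    rcases hmem with h | h
    · exact absurd h hu
    · exact ⟨h, fun he => hu (by rw [show u = v from he]; exact hv1)⟩
  have hup2 : minrk F G ≤ minrk F (G.induce (S1 \ {v})) + minrk F (G.induce S2) := by
    refine minrk_le_cover G (S1 \ {v}) S2 ?_
    intro u hu
    by_cases huv : u = v
    · rw [huv]; exact hv2
    · have hmem : u ∈ S1 ∪ S2 := by rw [hcup]; exact Set.mem_univ u
      rcases hmem with h | h
      · exact absurd ⟨h, huv⟩ hu
      · exact h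
  have hlow : minrk F (G.induce (S1 \ {v})) + minrk F (G.induce (S2 \ {v})) ≤ minrk F G := by
    obtain ⟨M, hM, hrk⟩ := minrk_mem (F := F) G
    have hblocks := blocks_eq M (S1 \ {v}) (S2 \ {v})
      (fun a b => (hz M hM a b).1) (fun a b => (hz M hM a b).2)
    have hfA := fits_induce hM (S1 \ {v})
    have hfB := fits_induce hM (S2 \ {v})
    calc minrk F (G.induce (S1 \ {v})) + minrk F (G.induce (S2 \ {v}))
        ≤ (M.submatrix (fun a : ↥(S1 \ {v} : Set V) => (a : V)) (fun a : ↥(S1 \ {v} : Set V) => (a : V))).rank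
          + (M.submatrix (fun b : ↥(S2 \ {v} : Set V) => (b : V)) (fun b : ↥(S2 \ {v} : Set V) => (b : V))).rank :=
          add_le_add (minrk_le hfA) (minrk_le hfB)
      _ = (M.submatrix
            (Sum.elim (fun a : ↥(S1 \ {v} : Set V) => (a : V))
              (fun b : ↥(S2 \ {v} : Set V) => (b : V)))
            (Sum.elim (fun a : ↥(S1 \ {v} : Set V) => (a : V))
              (fun b : ↥(S2 \ {v} : Set V) => (b : V)))).rank := by
          rw [hblocks]; exact (rank_fromBlocks_diag _ _).symm
      _ ≤ M.rank := rank_submatrix_le' M _ _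
      _ = minrk F G := hrk
  by_cases he1 : minrk F (G.induce S1) = minrk F (G.induce (S1 \ {v}))
  · rw [he1, Nat.sub_self, zero_mul, add_zero]
    exact le_antisymm (by omega) hlow
  by_cases he2 : minrk F (G.induce S2) = minrk F (G.induce (S2 \ {v}))
  · rw [he2, Nat.sub_self, mul_zero, add_zero]
    exact le_antisymm (by omega) hlow
  have h1 : minrk F (G.induce S1) = minrk F (G.induce (S1 \ {v})) + 1 := by omega
  have h2 : minrk F (G.induce S2) = minrk F (G.induce (S2 \ {v})) + 1 := by omega
  have hhard : minrk F (G.induce (S1 \ {v})) + minrk F (G.induce (S2 \ {v})) + 1 ≤ minrk F G := by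
    by_contra hcon
    push_neg at hcon
    obtain ⟨M, hM, hrk⟩ := minrk_mem (F := F) G
    set g : ↥(S1 \ {v} : Set V) ⊕ ↥(S2 \ {v} : Set V) → V :=
      Sum.elim (fun a => (a : V)) (fun b => (b : V)) with hg
    have hblocks := blocks_eq M (S1 \ {v}) (S2 \ {v})
      (fun a b => (hz M hM a b).1) (fun a b => (hz M hM a b).2)
    have hfA := fits_induce hM (S1 \ {v})
    have hfB := fits_induce hM (S2 \ {v})
    have hrAle := minrk_le hfA
    have hrBle := minrk_le hfB
    have hsubgg : (M.submatrix g g).rank =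
        (M.submatrix (fun a : ↥(S1 \ {v} : Set V) => (a : V)) (fun a : ↥(S1 \ {v} : Set V) => (a : V))).rank
          + (M.submatrix (fun b : ↥(S2 \ {v} : Set V) => (b : V)) (fun b : ↥(S2 \ {v} : Set V) => (b : V))).rank := by
      rw [hg, hblocks]; exact rank_fromBlocks_diag _ _
    have hggle : (M.submatrix g g).rank ≤ M.rank := rank_submatrix_le' M g g
    have hrowle : M.rank ≤ (M.submatrix g id).rank := by
      have h3 : (M.submatrix g g).rank ≤ (M.submatrix g id).rank :=
        rank_submatrix_le' (M.submatrix g id) id g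
      omega
    obtain ⟨c, hc⟩ := exists_row_combo M g hrowle v
    have hcolle : Mᵀ.rank ≤ (Mᵀ.submatrix g id).rank := by
      have e1 : Mᵀ.rank = M.rank := M.rank_transpose
      have h3 : (M.submatrix g g).rank ≤ (M.submatrix id g).rank :=
        rank_submatrix_le' (M.submatrix id g) g id
      have e2 : (Mᵀ.submatrix g id).rank = (M.submatrix id g).rank := by
        rw [← Matrix.transpose_submatrix]
        exact Matrix.rank_transpose _
      omega
    obtain ⟨c', hc'⟩ := exists_row_combo Mᵀ g hcolle v
    have hδ2 : ∑ x : ↥(S1 \ {v} : Set V), c (Sum.inl x) * M ↑x v = 0 := by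
      refine delta_zero G M hM S1 v (fun x => c (Sum.inl x)) (fun y => c' (Sum.inl y)) ?_ ?_ ?_
      · intro x
        rw [hc ↑x, Fintype.sum_sum_type]
        have hzero : ∀ y : ↥(S2 \ {v} : Set V), c (Sum.inr y) * M (g (Sum.inr y)) ↑x = 0 := by
          intro y
          have h5 : M ↑y ↑x = 0 := (hz M hM x y).2
          simp [hg, h5]
        rw [Finset.sum_congr rfl (fun y _ => hzero y)]
        simp [hg]
      · intro x
        have h4 := hc' ↑x
        rw [Fintype.sum_sum_type] at h4
        have hzero : ∀ y : ↥(S2 \ {v} : Set V), c' (Sum.inr y) * Mᵀ (g (Sum.inr y)) ↑x = 0 := by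
          intro y
          have h5 : M ↑x ↑y = 0 := (hz M hM x y).1
          simp [hg, Matrix.transpose_apply, h5]
        rw [Finset.sum_congr rfl (fun y _ => hzero y)] at h4
        simpa [hg, Matrix.transpose_apply] using h4
      · omega
    have hδ1 : ∑ y : ↥(S2 \ {v} : Set V), c (Sum.inr y) * M ↑y v = 0 := by
      refine delta_zero G M hM S2 v (fun y => c (Sum.inr y)) (fun y => c' (Sum.inr y)) ?_ ?_ ?_
      · intro y
        rw [hc ↑y, Fintype.sum_sum_type]
        have hzero : ∀ x : ↥(S1 \ {v} : Set V), c (Sum.inl x) * M (g (Sum.inl x)) ↑y = 0 := by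
          intro x
          have h5 : M ↑x ↑y = 0 := (hz M hM x y).1
          simp [hg, h5]
        rw [Finset.sum_congr rfl (fun x _ => hzero x)]
        simp [hg]
      · intro y
        have h4 := hc' ↑y
        rw [Fintype.sum_sum_type] at h4
        have hzero : ∀ x : ↥(S1 \ {v} : Set V), c' (Sum.inl x) * Mᵀ (g (Sum.inl x)) ↑y = 0 := by
          intro x
          have h5 : M ↑y ↑x = 0 := (hz M hM x y).2
          simp [hg, Matrix.transpose_apply, h5]
        rw [Finset.sum_congr rfl (fun x _ => hzero x)] at h4
        simpa [hg, Matrix.transpose_apply] using h4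
      · omega
    have hvv := hc v
    rw [Fintype.sum_sum_type] at hvv
    have e1 : ∑ x : ↥(S1 \ {v} : Set V), c (Sum.inl x) * M (g (Sum.inl x)) v = 0 := by
      simpa [hg] using hδ2
    have e2 : ∑ y : ↥(S2 \ {v} : Set V), c (Sum.inr y) * M (g (Sum.inr y)) v = 0 := by
      simpa [hg] using hδ1
    rw [e1, e2, add_zero] at hvv
    exact hM.1 v hvv
  have e1 : minrk F (G.induce S1) - minrk F (G.induce (S1 \ {v})) = 1 := by omega
  have e2 : minrk F (G.induce S2) - minrk F (G.induce (S2 \ {v})) = 1 := by omega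
  rw [e1, e2, mul_one]
  omega
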